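/- Let W be an n×n real matrix, T a positive integer, and let y : {1,...,T} → [-1,1] be any function. Suppose σ_max(W) ≤ T/2. Then for any T₀ < T and any nonzero g ∈ ℝ^n, e^{-2σ_max(W)}·‖g‖ ≤ ‖(∏_{t=T₀+1}^{T} (I + (y(t)/T)·W))ᵀ g‖ ≤ e^{σ_max(W)}·‖g‖. -/

import Mathlib

set_option maxHeartbeats 1000000
open Matrix

/-- Largest singular value (ℓ²-operator norm) of a real square matrix. -/
noncomputable def sigmaMax {n : ℕ} (A : Matrix (Fin n) (Fin n) ℝ) : ℝ :=
  ‖(Matrix.toEuclideanCLM (𝕜 := ℝ) A : EuclideanSpace ℝ (Fin n) →L[ℝ] EuclideanSpace ℝ (Fin n))‖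

/-- The ordered matrix product `∏_{t=a+1}^{b} (I + (y t / T) • W)` with later
indices applied on the left. -/
noncomputable def fruProd {n : ℕ} (y : ℕ → ℝ) (T : ℕ)
    (W : Matrix (Fin n) (Fin n) ℝ) (a b : ℕ) : Matrix (Fin n) (Fin n) ℝ :=
  ((List.range (b - a)).map
    (fun i => (1 : Matrix (Fin n) (Fin n) ℝ) + (y (b - i) / T) • W)).prod

private lemma fru_list_prod_bound {n : ℕ} (c C : ℝ) (hc : 0 ≤ c) (hC : 0 ≤ C)
    (l : List (EuclideanSpace ℝ (Fin n) →L[ℝ] EuclideanSpace ℝ (Fin n)))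
    (h : ∀ f ∈ l, ∀ x : EuclideanSpace ℝ (Fin n), c * ‖x‖ ≤ ‖f x‖ ∧ ‖f x‖ ≤ C * ‖x‖)
    (x : EuclideanSpace ℝ (Fin n)) :
    c ^ l.length * ‖x‖ ≤ ‖l.prod x‖ ∧ ‖l.prod x‖ ≤ C ^ l.length * ‖x‖ := by
  induction l with
  | nil => simp
  | cons f t ih =>
    have hf := h f (List.mem_cons_self) (t.prod x)
    have ht := ih (fun g hg => h g (List.mem_cons_of_mem _ hg))
    have happ : (f :: t).prod x = f (t.prod x) := by
      rw [List.prod_cons]; rfl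
    rw [happ, List.length_cons, pow_succ, pow_succ]
    constructor
    · calc c ^ t.length * c * ‖x‖ = c * (c ^ t.length * ‖x‖) := by ring
        _ ≤ c * ‖t.prod x‖ := by
            exact mul_le_mul_of_nonneg_left ht.1 hc
        _ ≤ ‖f (t.prod x)‖ := hf.1
    · calc ‖f (t.prod x)‖ ≤ C * ‖t.prod x‖ := hf.2
        _ ≤ C * (C ^ t.length * ‖x‖) := mul_le_mul_of_nonneg_left ht.2 hC
        _ = C ^ t.length * C * ‖x‖ := by ring

theorem generalized_fru_gradient_bound {n : ℕ}
    (W : Matrix (Fin n) (Fin n) ℝ) (T : ℕ) (hT : 0 < T)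
    (y : ℕ → ℝ) (hy : ∀ t ∈ Finset.Icc 1 T, y t ∈ Set.Icc (-1:ℝ) 1)
    (hW : sigmaMax W ≤ T / 2) (T₀ : ℕ) (hT₀ : T₀ < T)
    (g : EuclideanSpace ℝ (Fin n)) (hg : g ≠ 0) :
    Real.exp (-2 * sigmaMax W) * ‖g‖
        ≤ ‖(Matrix.toEuclideanCLM (𝕜 := ℝ) (fruProd y T W T₀ T).transpose) g‖ ∧
    ‖(Matrix.toEuclideanCLM (𝕜 := ℝ) (fruProd y T W T₀ T).transpose) g‖
        ≤ Real.exp (sigmaMax W) * ‖g‖ := by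
  classical
  set s := sigmaMax W with hs
  have hs0 : 0 ≤ s := norm_nonneg _
  have hT' : (0:ℝ) < T := by exact_mod_cast hT
  -- norm of toEuclideanCLM of transpose
  have hWT : ‖Matrix.toEuclideanCLM (𝕜 := ℝ) Wᵀ‖ = s := by
    have h : Wᵀ = star W := by
      rw [Matrix.star_eq_conjTranspose, Matrix.conjTranspose]; ext i j; simp
    rw [h, map_star, ContinuousLinearMap.star_eq_adjoint]
    exact ContinuousLinearMap.adjoint.norm_map _
  -- the list of matrices
  set L : List (Matrix (Fin n) (Fin n) ℝ) :=
    (List.range (T - T₀)).map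
      (fun i => (1 : Matrix (Fin n) (Fin n) ℝ) + (y (T - i) / T) • W) with hL
  have hprod : fruProd y T W T₀ T = L.prod := rfl
  -- transpose of the product as a list product of CLMs
  set l : List (EuclideanSpace ℝ (Fin n) →L[ℝ] EuclideanSpace ℝ (Fin n)) :=
    ((L.map Matrix.transpose).reverse).map (Matrix.toEuclideanCLM (𝕜 := ℝ)) with hl
  have hCLM : Matrix.toEuclideanCLM (𝕜 := ℝ) (fruProd y T W T₀ T).transpose = l.prod := by
    rw [hprod, Matrix.transpose_list_prod, hl, map_list_prod]
  have hlen : l.length = T - T₀ := by simp [hl, hL]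
  -- pointwise bounds for each factor
  have hfac : ∀ f ∈ l, ∀ x : EuclideanSpace ℝ (Fin n),
      (1 - s / T) * ‖x‖ ≤ ‖f x‖ ∧ ‖f x‖ ≤ (1 + s / T) * ‖x‖ := by
    intro f hf x
    rw [hl] at hf
    obtain ⟨M, hM, rfl⟩ := List.mem_map.mp hf
    rw [List.mem_reverse] at hM
    obtain ⟨A, hA, rfl⟩ := List.mem_map.mp hM
    rw [hL] at hA
    obtain ⟨i, hi, rfl⟩ := List.mem_map.mp hA
    rw [List.mem_range] at hi
    -- bound on the coefficient
    have ht1 : 1 ≤ T - i := by omega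
    have ht2 : T - i ≤ T := by omega
    have hyt : |y (T - i)| ≤ 1 := by
      have := hy (T - i) (Finset.mem_Icc.mpr ⟨ht1, ht2⟩)
      exact abs_le.mpr ⟨this.1, this.2⟩
    have hcoef : |y (T - i) / (T:ℝ)| ≤ 1 / T := by
      rw [abs_div, abs_of_pos hT']
      gcongr
    -- compute the CLM
    have heq : Matrix.toEuclideanCLM (𝕜 := ℝ)
        ((1 : Matrix (Fin n) (Fin n) ℝ) + (y (T - i) / T) • W)ᵀ
        = 1 + (y (T - i) / T) • Matrix.toEuclideanCLM (𝕜 := ℝ) Wᵀ := by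
      rw [Matrix.transpose_add, Matrix.transpose_one, Matrix.transpose_smul,
        map_add, _root_.map_one, _root_.map_smul]
    rw [heq]
    set w := Matrix.toEuclideanCLM (𝕜 := ℝ) Wᵀ with hw
    set c := y (T - i) / (T:ℝ) with hcc
    have happ : (1 + c • w) x = x + c • w x := by
      simp [ContinuousLinearMap.add_apply, ContinuousLinearMap.one_apply]
    have hwx : ‖c • w x‖ ≤ s / T * ‖x‖ := by
      rw [norm_smul]
      calc ‖c‖ * ‖w x‖ ≤ (1/T) * (s * ‖x‖) := by
            apply mul_le_mul hcoef _ (norm_nonneg _) (by positivity)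
            calc ‖w x‖ ≤ ‖w‖ * ‖x‖ := w.le_opNorm x
              _ = s * ‖x‖ := by rw [hWT]
        _ = s / T * ‖x‖ := by ring
    rw [happ]
    constructor
    · calc (1 - s / T) * ‖x‖ = ‖x‖ - s / T * ‖x‖ := by ring
        _ ≤ ‖x‖ - ‖c • w x‖ := by linarith
        _ ≤ ‖x + c • w x‖ := by
            have := norm_sub_norm_le x (-(c • w x))
            simpa [sub_neg_eq_add] using this
    · calc ‖x + c • w x‖ ≤ ‖x‖ + ‖c • w x‖ := norm_add_le _ _
        _ ≤ ‖x‖ + s / T * ‖x‖ := by linarith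
        _ = (1 + s / T) * ‖x‖ := by ring
  -- numeric facts
  have hsT : s / T ≤ 1 / 2 := by
    rw [div_le_div_iff₀ hT' (by norm_num)]
    linarith [hW]
  have hc0 : (0:ℝ) ≤ 1 - s / T := by linarith
  have hC0 : (0:ℝ) ≤ 1 + s / T := by positivity
  have hk : (T - T₀ : ℕ) ≤ T := Nat.sub_le _ _
  set k := T - T₀ with hkdef
  have hbounds := fru_list_prod_bound (1 - s / T) (1 + s / T) hc0 hC0 l hfac g
  rw [hlen] at hbounds
  have hkT : (k : ℝ) ≤ T := by exact_mod_cast hk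
  have hks : (k : ℝ) * (s / T) ≤ s := by
    calc (k : ℝ) * (s / T) ≤ (T : ℝ) * (s / T) :=
          mul_le_mul_of_nonneg_right hkT (by positivity)
      _ = s := by field_simp
  constructor
  · refine le_trans ?_ (hCLM ▸ hbounds.1)
    apply mul_le_mul_of_nonneg_right _ (norm_nonneg g)
    -- exp (-2 s) ≤ (1 - s/T)^k
    have h1 : Real.exp (-2 * (s / T)) ≤ 1 - s / T := by
      have h2 : 1 + 2 * (s / T) ≤ Real.exp (2 * (s / T)) := by
        have := Real.add_one_le_exp (2 * (s / T)); linarith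
      have h3 : Real.exp (-2 * (s / T)) * Real.exp (2 * (s / T)) = 1 := by
        rw [← Real.exp_add]; ring_nf; exact Real.exp_zero
      have h4 := Real.exp_pos (2 * (s / T))
      have hu0 : 0 ≤ s / T := by positivity
      nlinarith [Real.exp_pos (-2 * (s / T))]
    calc Real.exp (-2 * s) ≤ Real.exp ((k : ℝ) * (-2 * (s / T))) := by
          apply Real.exp_le_exp.mpr
          nlinarith [hks]
      _ = Real.exp (-2 * (s / T)) ^ k := by rw [← Real.exp_nat_mul]
      _ ≤ (1 - s / T) ^ k := pow_le_pow_left₀ (Real.exp_nonneg _) h1 k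
  · refine le_trans (hCLM ▸ hbounds.2) ?_
    apply mul_le_mul_of_nonneg_right _ (norm_nonneg g)
    calc (1 + s / T) ^ k ≤ Real.exp (s / T) ^ k := by
          apply pow_le_pow_left₀ hC0
          have := Real.add_one_le_exp (s / T); linarith
      _ = Real.exp ((k : ℝ) * (s / T)) := by rw [← Real.exp_nat_mul]
      _ ≤ Real.exp s := by
          exact Real.exp_le_exp.mpr hks
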